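/- Let f, g : [a,b] → ℝ be strictly quasiconcave with peak points m_f, m_g, and suppose h = min{f,g} satisfies h(x) = g(x) for x < x₀, h(x₀) = f(x₀) = g(x₀), and h(x) = f(x) for x > x₀, for some x₀ ∈ [a,b]. Then the peak point of h equals m_f if x₀ < m_f, equals x₀ if m_f ≤ x₀ ≤ m_g, and equals m_g if m_g < x₀. -/
import Mathlib


open Set

/-- `m` is the peak point of `f` on `[a,b]`: `f` is strictly increasing before `m` and
strictly decreasing after `m` (one of the two boundary conventions). -/
def IsPeakPt (f : ℝ → ℝ) (a b m : ℝ) : Prop :=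
  m ∈ Set.Icc a b ∧
    ((StrictMonoOn f (Set.Icc a m) ∧ StrictAntiOn f (Set.Ioc m b)) ∨
     (StrictMonoOn f (Set.Ico a m) ∧ StrictAntiOn f (Set.Icc m b)))

private lemma conflict {φ : ℝ → ℝ} {s t : ℝ} (hst : s < t)
    (hmono : ∀ u v : ℝ, s < u → u < v → v < t → φ u < φ v)
    (hanti : ∀ u v : ℝ, s < u → u < v → v < t → φ v < φ u) : False := by
  have h1 := hmono (s + (t-s)/3) (s + 2*(t-s)/3) (by linarith) (by linarith) (by linarith)
  have h2 := hanti (s + (t-s)/3) (s + 2*(t-s)/3) (by linarith) (by linarith) (by linarith)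
  linarith

private lemma mono_part {φ : ℝ → ℝ} {a b m : ℝ}
    (h : (StrictMonoOn φ (Set.Icc a m) ∧ StrictAntiOn φ (Set.Ioc m b)) ∨
      (StrictMonoOn φ (Set.Ico a m) ∧ StrictAntiOn φ (Set.Icc m b)))
    {u v : ℝ} (hau : a ≤ u) (huv : u < v) (hvm : v < m) : φ u < φ v := by
  rcases h with ⟨hm, _⟩ | ⟨hm, _⟩
  · exact hm ⟨hau, by linarith⟩ ⟨by linarith, le_of_lt hvm⟩ huv
  · exact hm ⟨hau, by linarith⟩ ⟨by linarith, hvm⟩ huv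

private lemma anti_part {φ : ℝ → ℝ} {a b m : ℝ}
    (h : (StrictMonoOn φ (Set.Icc a m) ∧ StrictAntiOn φ (Set.Ioc m b)) ∨
      (StrictMonoOn φ (Set.Ico a m) ∧ StrictAntiOn φ (Set.Icc m b)))
    {u v : ℝ} (hmu : m < u) (huv : u < v) (hvb : v ≤ b) : φ v < φ u := by
  rcases h with ⟨_, hA⟩ | ⟨_, hA⟩
  · exact hA ⟨hmu, by linarith⟩ ⟨by linarith, hvb⟩ huv
  · exact hA ⟨le_of_lt hmu, by linarith⟩ ⟨by linarith, hvb⟩ huv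

/-- If `h = min{f,g}` equals `g` before `x₀`, `f = g` at `x₀` and `f` after `x₀`,
then the peak of `h` is `m_f` if `x₀ < m_f`, `x₀` if `m_f ≤ x₀ ≤ m_g`, and `m_g` if `m_g < x₀`. -/
theorem peak_of_min_crossing (a b : ℝ) (hab : a ≤ b) (f g : ℝ → ℝ)
    (hf : ∀ x ∈ Icc a b, ∀ x' ∈ Icc a b, x < x' → ∀ l ∈ Ioo (0:ℝ) 1,
      min (f x) (f x') < f (l * x + (1 - l) * x'))
    (hg : ∀ x ∈ Icc a b, ∀ x' ∈ Icc a b, x < x' → ∀ l ∈ Ioo (0:ℝ) 1,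
      min (g x) (g x') < g (l * x + (1 - l) * x'))
    (mf mg mh x₀ : ℝ) (hx₀ : x₀ ∈ Icc a b)
    (hmf : IsPeakPt f a b mf) (hmg : IsPeakPt g a b mg)
    (hmh : IsPeakPt (fun x => min (f x) (g x)) a b mh)
    (hbefore : ∀ x ∈ Icc a b, x < x₀ → min (f x) (g x) = g x)
    (hat : f x₀ = g x₀)
    (hafter : ∀ x ∈ Icc a b, x₀ < x → min (f x) (g x) = f x) :
    (x₀ < mf → mh = mf) ∧
    (mf ≤ x₀ → x₀ ≤ mg → mh = x₀) ∧
    (mg < x₀ → mh = mg) := by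
  obtain ⟨⟨ha_mf, hmf_b⟩, hfC⟩ := hmf
  obtain ⟨⟨ha_mg, hmg_b⟩, hgC⟩ := hmg
  obtain ⟨⟨ha_mh, hmh_b⟩, hhC⟩ := hmh
  obtain ⟨hax0, hx0b⟩ := hx₀
  refine ⟨?_, ?_, ?_⟩
  · -- Case 1 : x₀ < mf → mh = mf
    intro h1
    rcases lt_trichotomy mh mf with hlt | heq | hgt
    · exfalso
      refine conflict (φ := fun x => min (f x) (g x)) (s := max mh x₀) (t := mf) (max_lt hlt h1)
        (fun u v hsu huv hvt => ?_) (fun u v hsu huv hvt => ?_)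
      · have hle1 := le_max_left mh x₀
        have hle2 := le_max_right mh x₀
        have hu : min (f u) (g u) = f u := hafter u ⟨by linarith, by linarith⟩ (by linarith)
        have hv : min (f v) (g v) = f v := hafter v ⟨by linarith, by linarith⟩ (by linarith)
        show min (f u) (g u) < min (f v) (g v)
        rw [hu, hv]
        exact mono_part hfC (by linarith [le_max_left mh x₀]) huv hvt
      · exact anti_part hhC (by linarith [le_max_left mh x₀]) huv (by linarith)
    · exact heq
    · exfalso
      refine conflict (φ := fun x => min (f x) (g x)) (s := mf) (t := mh) hgt
        (fun u v hsu huv hvt => ?_) (fun u v hsu huv hvt => ?_)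
      · exact mono_part hhC (by linarith) huv hvt
      · have hu : min (f u) (g u) = f u := hafter u ⟨by linarith, by linarith⟩ (by linarith)
        have hv : min (f v) (g v) = f v := hafter v ⟨by linarith, by linarith⟩ (by linarith)
        show min (f v) (g v) < min (f u) (g u)
        rw [hu, hv]
        exact anti_part hfC hsu huv (by linarith)
  · -- Case 2 : mf ≤ x₀ ≤ mg → mh = x₀
    intro h2 h3
    rcases lt_trichotomy mh x₀ with hlt | heq | hgt
    · exfalso
      refine conflict (φ := fun x => min (f x) (g x)) (s := mh) (t := x₀) hlt
        (fun u v hsu huv hvt => ?_) (fun u v hsu huv hvt => ?_)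
      · have hu : min (f u) (g u) = g u := hbefore u ⟨by linarith, by linarith⟩ (by linarith)
        have hv : min (f v) (g v) = g v := hbefore v ⟨by linarith, by linarith⟩ (by linarith)
        show min (f u) (g u) < min (f v) (g v)
        rw [hu, hv]
        exact mono_part hgC (by linarith) huv (by linarith)
      · exact anti_part hhC hsu huv (by linarith)
    · exact heq
    · exfalso
      refine conflict (φ := fun x => min (f x) (g x)) (s := x₀) (t := mh) hgt
        (fun u v hsu huv hvt => ?_) (fun u v hsu huv hvt => ?_)
      · exact mono_part hhC (by linarith) huv hvt
      · have hu : min (f u) (g u) = f u := hafter u ⟨by linarith, by linarith⟩ (by linarith)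
        have hv : min (f v) (g v) = f v := hafter v ⟨by linarith, by linarith⟩ (by linarith)
        show min (f v) (g v) < min (f u) (g u)
        rw [hu, hv]
        exact anti_part hfC (by linarith) huv (by linarith)
  · -- Case 3 : mg < x₀ → mh = mg
    intro h1
    rcases lt_trichotomy mh mg with hlt | heq | hgt
    · exfalso
      refine conflict (φ := fun x => min (f x) (g x)) (s := mh) (t := mg) hlt
        (fun u v hsu huv hvt => ?_) (fun u v hsu huv hvt => ?_)
      · have hu : min (f u) (g u) = g u := hbefore u ⟨by linarith, by linarith⟩ (by linarith)
        have hv : min (f v) (g v) = g v := hbefore v ⟨by linarith, by linarith⟩ (by linarith)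
        show min (f u) (g u) < min (f v) (g v)
        rw [hu, hv]
        exact mono_part hgC (by linarith) huv hvt
      · exact anti_part hhC hsu huv (by linarith)
    · exact heq
    · exfalso
      refine conflict (φ := fun x => min (f x) (g x)) (s := mg) (t := min mh x₀) (lt_min hgt h1)
        (fun u v hsu huv hvt => ?_) (fun u v hsu huv hvt => ?_)
      · have hle1 := min_le_left mh x₀
        have hle2 := min_le_right mh x₀
        exact mono_part hhC (by linarith) huv (by linarith)
      · have hle1 := min_le_left mh x₀
        have hle2 := min_le_right mh x₀
        have hu : min (f u) (g u) = g u := hbefore u ⟨by linarith, by linarith⟩ (by linarith)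
        have hv : min (f v) (g v) = g v := hbefore v ⟨by linarith, by linarith⟩ (by linarith)
        show min (f v) (g v) < min (f u) (g u)
        rw [hu, hv]
        exact anti_part hgC (by linarith) huv (by linarith)
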